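/- Let E be a finite effect algebra with exactly twelve pairwise distinct atoms a_1,…,a_12 such that a_1⊕a_2⊕a_3⊕a_4 = 1, a_5⊕a_6⊕a_7⊕a_8 = 1, a_9⊕a_10⊕a_11⊕a_12 = 1, a_1⊕a_5⊕a_9 = 1, a_2⊕a_6⊕a_10 = 1, a_3⊕a_7⊕a_11 = 1, a_4⊕a_8⊕a_12 = 1, and such that Seq(E) consists exactly of the seven corresponding 0–1 vectors in ℕ^12 (the seven rows of the incidence matrix of these relations). Then E has no state. -/

import Mathlib

/-- An effect algebra: a set with 0, 1 and a partially defined binary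
operation `⊕`, modeled as an `Option`-valued operation. -/
structure EffectAlgebra (E : Type*) where
  oplus : E → E → Option E
  zero : E
  one : E
  comm : ∀ p q, oplus p q = oplus q p
  assoc : ∀ p q r s qr, oplus q r = some qr → oplus p qr = some s →
    ∃ pq, oplus p q = some pq ∧ oplus pq r = some s
  orthosupp : ∀ p, ∃! q, oplus p q = some one
  zero_unit : ∀ p q, oplus one p = some q → p = zero

namespace EffectAlgebra

variable {E : Type*}

/-- `p ≤ q` iff there is `r` with `p ⊕ r` defined and equal to `q`. -/
def le (W : EffectAlgebra E) (p q : E) : Prop := ∃ r, W.oplus p r = some q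

/-- An atom is a minimal element of `E \ {0}`. -/
def IsAtomElem (W : EffectAlgebra E) (x : E) : Prop :=
  x ≠ W.zero ∧ ∀ y : E, W.le y x → y ≠ W.zero → y = x

/-- Partial orthosum of a list of elements. -/
def listSum (W : EffectAlgebra E) : List E → Option E
  | [] => some W.zero
  | x :: xs => (listSum W xs).bind (fun y => W.oplus x y)

/-- The orthosum `k 0 • a 0 ⊕ ⋯ ⊕ k (m-1) • a (m-1)`, when defined. -/
def mulSum (W : EffectAlgebra E) {m : ℕ} (a : Fin m → E) (k : Fin m → ℕ) : Option E :=
  W.listSum ((List.ofFn (fun t => List.replicate (k t) (a t))).flatten)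

/-- `Seq(E)`: tuples `k` with `⨁ k t • a t` defined and equal to `1`. -/
def SeqSet (W : EffectAlgebra E) {m : ℕ} (a : Fin m → E) : Set (Fin m → ℕ) :=
  {k | W.mulSum a k = some W.one}

/-- `a : Fin m → E` enumerates the atoms of `E` without repetition. -/
def AtomFamily (W : EffectAlgebra E) {m : ℕ} (a : Fin m → E) : Prop :=
  Function.Injective a ∧ (∀ t, W.IsAtomElem (a t)) ∧
    ∀ x : E, W.IsAtomElem x → ∃ t, x = a t

/-- `A ∈ M(E)`: the rows of `A` are pairwise distinct and enumerate `Seq(E)`. -/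
def MemM (W : EffectAlgebra E) {m n : ℕ} (a : Fin m → E) (A : Matrix (Fin n) (Fin m) ℕ) : Prop :=
  (∀ i j : Fin n, i ≠ j → ∃ t, A i t ≠ A j t) ∧
    {k : Fin m → ℕ | ∃ i, A i = k} = W.SeqSet a

/-- A state on an effect algebra. -/
def IsState (W : EffectAlgebra E) (s : E → ℝ) : Prop :=
  (∀ x, 0 ≤ s x ∧ s x ≤ 1) ∧ s W.one = 1 ∧
    ∀ p q r, W.oplus p q = some r → s p + s q ≤ 1 ∧ s r = s p + s q

end EffectAlgebra

/-- `(A|1)`: the matrix `A` augmented by a column of ones. -/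
def augmentOnes {n m : ℕ} {R : Type*} [One R] (A : Matrix (Fin n) (Fin m) R) :
    Matrix (Fin n) (Fin (m + 1)) R :=
  Matrix.of fun i j => if h : (j : ℕ) < m then A i ⟨j, h⟩ else 1

section Aux

variable {E : Type*} (W : EffectAlgebra E) {s : E → ℝ}

lemma state_zero (hs : W.IsState s) : s W.zero = 0 := by
  obtain ⟨q, hq, _⟩ := W.orthosupp W.one
  have hz := W.zero_unit q W.one hq
  subst hz
  have := (hs.2.2 W.one W.zero W.one hq).2
  linarith

lemma listSum_state (hs : W.IsState s) :
    ∀ l : List E, ∀ x, W.listSum l = some x → s x = (l.map s).sum := by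
  intro l
  induction l with
  | nil =>
    intro x hx
    simp only [EffectAlgebra.listSum, Option.some.injEq] at hx
    simp [← hx, state_zero W hs]
  | cons y ys ih =>
    intro x hx
    simp only [EffectAlgebra.listSum, Option.bind_eq_some_iff] at hx
    obtain ⟨z, hz, hop⟩ := hx
    have := (hs.2.2 y z x hop).2
    simp [this, ih z hz]

lemma mulSum_state (hs : W.IsState s) {m : ℕ} (a : Fin m → E) (k : Fin m → ℕ) (x : E)
    (hx : W.mulSum a k = some x) : s x = ∑ t, (k t : ℝ) * s (a t) := by
  have := listSum_state W hs _ x hx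
  rw [this, List.map_flatten, List.map_ofFn, List.sum_flatten, List.map_ofFn, List.sum_ofFn]
  congr 1
  funext t
  simp [List.map_replicate, List.sum_replicate, nsmul_eq_mul, Function.comp]

end Aux

/-- Greechie's example: a finite effect algebra with twelve atoms satisfying
the seven orthosum relations, whose `Seq(E)` consists exactly of the seven
corresponding 0-1 vectors, has no state. -/
theorem greechie_no_state {E : Type*} [Fintype E] (W : EffectAlgebra E)
    (a : Fin 12 → E) (ha : W.AtomFamily a)
    (G : Matrix (Fin 7) (Fin 12) ℕ)
    (hG : G = !![1,1,1,1,0,0,0,0,0,0,0,0;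
                 0,0,0,0,1,1,1,1,0,0,0,0;
                 0,0,0,0,0,0,0,0,1,1,1,1;
                 1,0,0,0,1,0,0,0,1,0,0,0;
                 0,1,0,0,0,1,0,0,0,1,0,0;
                 0,0,1,0,0,0,1,0,0,0,1,0;
                 0,0,0,1,0,0,0,1,0,0,0,1])
    (hrel : ∀ i : Fin 7, W.mulSum a (G i) = some W.one)
    (hSeq : W.SeqSet a = {k : Fin 12 → ℕ | ∃ i : Fin 7, k = G i}) :
    ¬ ∃ h : E → ℝ, W.IsState h := by
  rintro ⟨s, hs⟩
  subst hG
  have key : ∀ l : List E, W.listSum l = some W.one → (l.map s).sum = 1 := by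
    intro l hl
    rw [← listSum_state W hs l W.one hl, hs.2.1]
  have h0 := key [a 0, a 1, a 2, a 3] (hrel 0)
  have h1 := key [a 4, a 5, a 6, a 7] (hrel 1)
  have h2 := key [a 8, a 9, a 10, a 11] (hrel 2)
  have h3 := key [a 0, a 4, a 8] (hrel 3)
  have h4 := key [a 1, a 5, a 9] (hrel 4)
  have h5 := key [a 2, a 6, a 10] (hrel 5)
  have h6 := key [a 3, a 7, a 11] (hrel 6)
  simp only [List.map_cons, List.map_nil, List.sum_cons, List.sum_nil, add_zero]
    at h0 h1 h2 h3 h4 h5 h6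
  linarith
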